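/- Suppose functions T^{(1)}_ℓ and T^{(a)}_1 (with T^{(0)}_1 = 1, T^{(1)}_0 = 1, T^{(1)}_{ℓ<0} = 0, T^{(a)}_1 = 0 for a < 0 or a > n+1) satisfy the determinant relation T^{(1)}_{ℓ+1}(λ) = det( T^{(1-i+j)}_1(λ q^{(ℓ+2-i-j)/2}) )_{1≤i,j≤ℓ+1} for all ℓ ≥ 0. Then conversely, for 1 ≤ a ≤ n+1, T^{(a)}_1(λ) = det( T^{(1)}_{1-i+j}(λ q^{(i+j-a-1)/2}) )_{1≤i,j≤a}. -/

import Mathlib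

open Finset Matrix

lemma negpow (a b : ℕ) (h : a % 2 = b % 2) : ((-1:ℂ))^a = (-1)^b := by
  conv_lhs => rw [← Nat.div_add_mod a 2]
  conv_rhs => rw [← Nat.div_add_mod b 2]
  rw [pow_add, pow_add, pow_mul, pow_mul]
  norm_num [h]

lemma jt_block (s : ℂ) (hs : s ≠ 0) (T1 : ℤ → ℂ → ℂ) (TL : ℤ → ℂ → ℂ)
    (hTL0 : ∀ lam, TL 0 lam = 1)
    (hTLdet : ∀ (l : ℕ) (lam : ℂ),
      TL ((l : ℤ) + 1) lam =
        Matrix.det (Matrix.of fun i j : Fin (l + 1) =>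
          T1 (1 - (i : ℤ) + (j : ℤ)) (lam * s ^ ((l : ℤ) - (i : ℤ) - (j : ℤ)))))
    (l k : ℕ) (lam : ℂ) :
    Matrix.det (Matrix.of fun r c : Fin k =>
        T1 (1 - (r:ℤ) + (c:ℤ)) (lam * s ^ ((l:ℤ) - (r:ℤ) - (c:ℤ))))
      = TL (k:ℤ) (lam * s ^ ((l:ℤ) + 1 - (k:ℤ))) := by
  cases k with
  | zero => simpa using (hTL0 _).symm
  | succ k' =>
    rw [show ((k'+1 : ℕ) : ℤ) = (k' : ℤ) + 1 by push_cast; ring,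
      hTLdet k' (lam * s ^ ((l:ℤ) + 1 - ((k':ℤ)+1)))]
    congr 1
    ext r c
    simp only [Matrix.of_apply]
    congr 1
    rw [mul_assoc, ← zpow_add₀ hs]
    congr 1
    ring

lemma jt_minor (s : ℂ) (hs : s ≠ 0) (T1 : ℤ → ℂ → ℂ) (TL : ℤ → ℂ → ℂ)
    (hT10 : ∀ lam, T1 0 lam = 1)
    (hT1neg : ∀ a : ℤ, a < 0 → ∀ lam, T1 a lam = 0)
    (hTL0 : ∀ lam, TL 0 lam = 1)
    (hTLdet : ∀ (l : ℕ) (lam : ℂ),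
      TL ((l : ℤ) + 1) lam =
        Matrix.det (Matrix.of fun i j : Fin (l + 1) =>
          T1 (1 - (i : ℤ) + (j : ℤ)) (lam * s ^ ((l : ℤ) - (i : ℤ) - (j : ℤ)))))
    (l : ℕ) (lam : ℂ) (i : Fin (l+1)) :
    Matrix.det ((Matrix.of fun i j : Fin (l + 1) =>
          T1 (1 - (i : ℤ) + (j : ℤ)) (lam * s ^ ((l : ℤ) - (i : ℤ) - (j : ℤ)))).submatrix
        i.succAbove (Fin.last l).succAbove)
      = TL ((i : ℕ) : ℤ) (lam * s ^ ((l : ℤ) + 1 - ((i:ℕ) : ℤ))) := by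
  have hk : (i:ℕ) ≤ l := Nat.lt_succ_iff.mp i.isLt
  let e : Fin (i:ℕ) ⊕ Fin (l-(i:ℕ)) ≃ Fin l := finSumFinEquiv.trans (finCongr (by omega))
  have hrow : ∀ ρ : Fin l, ((i.succAbove ρ) : ℕ) = if (ρ:ℕ) < (i:ℕ) then (ρ:ℕ) else (ρ:ℕ)+1 := by
    intro ρ
    rcases lt_or_ge ρ.castSucc i with h|h
    · rw [Fin.succAbove_of_castSucc_lt _ _ h]
      have : (ρ:ℕ) < (i:ℕ) := h
      simp [this]
    · rw [Fin.succAbove_of_le_castSucc _ _ h]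
      have : ¬ ((ρ:ℕ) < (i:ℕ)) := by
        have := Fin.le_def.mp h; simp at this; omega
      simp [this]
  have heL : ∀ r : Fin (i:ℕ), ((e (Sum.inl r) : Fin l) : ℕ) = (r : ℕ) := by
    intro r; simp [e, finCongr_apply]
  have heR : ∀ r : Fin (l-(i:ℕ)), ((e (Sum.inr r) : Fin l) : ℕ) = (i:ℕ) + (r : ℕ) := by
    intro r; simp [e, finCongr_apply]
  have hrowL : ∀ r : Fin (i:ℕ), ((i.succAbove (e (Sum.inl r))) : ℕ) = (r:ℕ) := by
    intro r; rw [hrow, heL]; simp [r.isLt]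
  have hrowR : ∀ r : Fin (l-(i:ℕ)), ((i.succAbove (e (Sum.inr r))) : ℕ) = (i:ℕ) + (r:ℕ) + 1 := by
    intro r; rw [hrow, heR]; simp
  have hM : ∀ (x y : Fin (l+1)) (u v : ℤ), ((x:ℕ):ℤ) = u → ((y:ℕ):ℤ) = v →
      T1 (1 - ((x:ℕ):ℤ) + ((y:ℕ):ℤ)) (lam * s ^ ((l:ℤ) - ((x:ℕ):ℤ) - ((y:ℕ):ℤ)))
        = T1 (1 - u + v) (lam * s ^ ((l:ℤ) - u - v)) := by
    intro x y u v hu hv; rw [hu, hv]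
  rw [Fin.succAbove_last, ← Matrix.det_submatrix_equiv_self e, Matrix.submatrix_submatrix]
  have hP : ((Matrix.of fun i j : Fin (l + 1) =>
          T1 (1 - (i : ℤ) + (j : ℤ)) (lam * s ^ ((l : ℤ) - (i : ℤ) - (j : ℤ)))).submatrix
        (i.succAbove ∘ e) (Fin.castSucc ∘ e))
      = Matrix.fromBlocks
          (Matrix.of fun r c : Fin (i:ℕ) =>
            T1 (1 - (r:ℤ) + (c:ℤ)) (lam * s ^ ((l:ℤ) - (r:ℤ) - (c:ℤ))))
          (Matrix.of fun (r : Fin (i:ℕ)) (c : Fin (l-(i:ℕ))) =>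
            T1 (1 - (r:ℤ) + (((i:ℕ):ℤ) + (c:ℕ))) (lam * s ^ ((l:ℤ) - (r:ℤ) - (((i:ℕ):ℤ) + (c:ℕ)))))
          0
          (Matrix.of fun r c : Fin (l-(i:ℕ)) =>
            T1 ((c:ℤ) - (r:ℤ)) (lam * s ^ ((l:ℤ) - (((i:ℕ):ℤ) + (r:ℕ) + 1) - (((i:ℕ):ℤ) + (c:ℕ))))) := by
    ext x y
    rcases x with r|r <;> rcases y with c|c <;>
      simp only [Matrix.submatrix_apply, Function.comp_apply, Matrix.fromBlocks_apply₁₁,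
        Matrix.fromBlocks_apply₁₂, Matrix.fromBlocks_apply₂₁, Matrix.fromBlocks_apply₂₂,
        Matrix.of_apply, Matrix.zero_apply]
    · exact hM _ _ ((r:ℕ):ℤ) ((c:ℕ):ℤ)
        (by exact_mod_cast congrArg (Nat.cast : ℕ → ℤ) (hrowL r))
        (by simp [heL c])
    · exact hM _ _ ((r:ℕ):ℤ) (((i:ℕ):ℤ) + (c:ℕ))
        (by exact_mod_cast congrArg (Nat.cast : ℕ → ℤ) (hrowL r))
        (by push_cast [Fin.coe_castSucc, heR c]; ring)
    · rw [hM _ _ (((i:ℕ):ℤ) + (r:ℕ) + 1) ((c:ℕ):ℤ)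
        (by push_cast [Fin.coe_castSucc, hrowR r]; ring)
        (by simp [heL c])]
      apply hT1neg
      have := c.isLt
      omega
    · exact hM _ _ (((i:ℕ):ℤ) + (r:ℕ) + 1) (((i:ℕ):ℤ) + (c:ℕ))
        (by push_cast [Fin.coe_castSucc, hrowR r]; ring)
        (by push_cast [Fin.coe_castSucc, heR c]; ring) |>.trans (by congr 1; ring)
  rw [hP, Matrix.det_fromBlocks_zero₂₁,
    jt_block s hs T1 TL hTL0 hTLdet l (i:ℕ) lam]
  have hD : Matrix.det (Matrix.of fun r c : Fin (l-(i:ℕ)) =>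
      T1 ((c:ℤ) - (r:ℤ)) (lam * s ^ ((l:ℤ) - (((i:ℕ):ℤ) + (r:ℕ) + 1) - (((i:ℕ):ℤ) + (c:ℕ))))) = 1 := by
    rw [Matrix.det_of_upperTriangular (M := Matrix.of fun r c : Fin (l-(i:ℕ)) =>
      T1 ((c:ℤ) - (r:ℤ)) (lam * s ^ ((l:ℤ) - (((i:ℕ):ℤ) + (r:ℕ) + 1) - (((i:ℕ):ℤ) + (c:ℕ)))))]
    · apply Finset.prod_eq_one
      intro x _
      rw [Matrix.of_apply, sub_self, hT10]
    · intro r c hrc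
      apply hT1neg
      have h2 : (c:ℕ) < (r:ℕ) := hrc
      omega
  rw [hD, mul_one]

lemma jt_expand (s : ℂ) (hs : s ≠ 0) (T1 : ℤ → ℂ → ℂ) (TL : ℤ → ℂ → ℂ)
    (hT10 : ∀ lam, T1 0 lam = 1)
    (hT1neg : ∀ a : ℤ, a < 0 → ∀ lam, T1 a lam = 0)
    (hTL0 : ∀ lam, TL 0 lam = 1)
    (hTLdet : ∀ (l : ℕ) (lam : ℂ),
      TL ((l : ℤ) + 1) lam =
        Matrix.det (Matrix.of fun i j : Fin (l + 1) =>
          T1 (1 - (i : ℤ) + (j : ℤ)) (lam * s ^ ((l : ℤ) - (i : ℤ) - (j : ℤ)))))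
    (l : ℕ) (lam : ℂ) :
    TL ((l:ℤ) + 1) lam
      = ∑ i ∈ Finset.range (l+1), (-1:ℂ)^(i+l) * T1 (1 - (i:ℤ) + (l:ℤ)) (lam * s ^ (-(i:ℤ)))
          * TL (i:ℤ) (lam * s ^ ((l:ℤ) + 1 - (i:ℤ))) := by
  rw [hTLdet l lam, Matrix.det_succ_column _ (Fin.last l),
    ← Fin.sum_univ_eq_sum_range (fun i : ℕ => (-1:ℂ)^(i+l) * T1 (1 - (i:ℤ) + (l:ℤ)) (lam * s ^ (-(i:ℤ)))
          * TL (i:ℤ) (lam * s ^ ((l:ℤ) + 1 - (i:ℤ)))) (l+1)]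
  refine Finset.sum_congr rfl fun i _ => ?_
  rw [jt_minor s hs T1 TL hT10 hT1neg hTL0 hTLdet l lam i]
  simp only [Matrix.of_apply, Fin.val_last]
  rw [show ((l:ℤ) - ((i:ℕ):ℤ) - (l:ℤ)) = -((i:ℕ):ℤ) from by ring]

lemma relkey (s : ℂ) (hs : s ≠ 0) (T1 : ℤ → ℂ → ℂ) (TL : ℤ → ℂ → ℂ)
    (hT10 : ∀ lam, T1 0 lam = 1)
    (hT1neg : ∀ a : ℤ, a < 0 → ∀ lam, T1 a lam = 0)
    (hTL0 : ∀ lam, TL 0 lam = 1)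
    (hTLdet : ∀ (l : ℕ) (lam : ℂ),
      TL ((l : ℤ) + 1) lam =
        Matrix.det (Matrix.of fun i j : Fin (l + 1) =>
          T1 (1 - (i : ℤ) + (j : ℤ)) (lam * s ^ ((l : ℤ) - (i : ℤ) - (j : ℤ)))))
    (m : ℕ) (hm : 1 ≤ m) (lam : ℂ) :
    ∑ k ∈ Finset.range (m+1),
        (-1:ℂ)^k * T1 (k:ℤ) (lam * s ^ (k:ℤ)) * TL ((m:ℤ) - (k:ℤ)) (lam * s ^ ((k:ℤ) + (m:ℤ)))
      = 0 := by
  obtain ⟨l, rfl⟩ : ∃ l, m = l + 1 := ⟨m-1, by omega⟩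
  rw [Finset.sum_range_succ']
  have hA := jt_expand s hs T1 TL hT10 hT1neg hTL0 hTLdet l (lam * s ^ ((l:ℤ)+1))
  have hsum : ∑ k ∈ Finset.range (l+1),
      (-1:ℂ)^(k+1) * T1 ((k+1:ℕ):ℤ) (lam * s ^ (((k+1:ℕ)):ℤ))
        * TL (((l+1:ℕ):ℤ) - ((k+1:ℕ):ℤ)) (lam * s ^ (((k+1:ℕ):ℤ) + ((l+1:ℕ):ℤ)))
      = - TL ((l:ℤ)+1) (lam * s ^ ((l:ℤ)+1)) := by
    rw [hA, ← Finset.sum_range_reflect, ← Finset.sum_neg_distrib]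
    refine Finset.sum_congr rfl fun j hj => ?_
    have hj' : j ≤ l := by simpa [Nat.lt_succ_iff] using hj
    have hd : (((l+1)-1-j : ℕ) : ℤ) = (l:ℤ) - j := by omega
    have hd2 : (((l+1)-1-j+1 : ℕ) : ℤ) = (l:ℤ) - j + 1 := by omega
    have hsgn : (-1:ℂ)^((l+1)-1-j+1) = (-1)^(j+l) * (-1) := by
      rw [negpow ((l+1)-1-j+1) (j+l+1) (by omega), pow_succ]
    have e1 : T1 (1-(j:ℤ)+l) (lam * s^((l:ℤ)+1)*s^(-(j:ℤ)))
        = T1 ((l:ℤ)-j+1) (lam * s^((l:ℤ)-j+1)) := by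
      rw [mul_assoc, ← zpow_add₀ hs, show ((l:ℤ)+1 + -(j:ℤ)) = (l:ℤ)-j+1 from by ring,
        show (1-(j:ℤ)+l) = (l:ℤ)-j+1 from by ring]
    have e2 : TL (j:ℤ) (lam * s^((l:ℤ)+1)*s^((l:ℤ)+1-j))
        = TL (((l+1:ℕ):ℤ) - ((l:ℤ)-j+1)) (lam * s^(((l:ℤ)-j+1)+((l+1:ℕ):ℤ))) := by
      rw [show (((l+1:ℕ):ℤ) - ((l:ℤ)-j+1)) = (j:ℤ) from by push_cast; ring,
        mul_assoc, ← zpow_add₀ hs,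
        show ((l:ℤ)+1 + ((l:ℤ)+1-(j:ℤ))) = ((l:ℤ)-j+1)+((l+1:ℕ):ℤ) from by push_cast; ring]
    rw [hsgn, hd2, e1, e2]
    ring
  rw [hsum]
  push_cast
  simp [hT10]

theorem stmt1 (n : ℕ) (s : ℂ) (hs : s ≠ 0)
    (T1 : ℤ → ℂ → ℂ)
    (hT10 : ∀ lam, T1 0 lam = 1)
    (hT1neg : ∀ a : ℤ, a < 0 → ∀ lam, T1 a lam = 0)
    (hT1high : ∀ a : ℤ, (n : ℤ) + 2 ≤ a → ∀ lam, T1 a lam = 0)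
    (TL : ℤ → ℂ → ℂ)
    (hTL0 : ∀ lam, TL 0 lam = 1)
    (hTLneg : ∀ l : ℤ, l < 0 → ∀ lam, TL l lam = 0)
    (hTLdet : ∀ (l : ℕ) (lam : ℂ),
      TL ((l : ℤ) + 1) lam =
        Matrix.det (Matrix.of fun i j : Fin (l + 1) =>
          T1 (1 - (i : ℤ) + (j : ℤ)) (lam * s ^ ((l : ℤ) - (i : ℤ) - (j : ℤ))))) :
    ∀ a : ℕ, 1 ≤ a → a ≤ n + 1 → ∀ lam : ℂ,
      T1 (a : ℤ) lam =
        Matrix.det (Matrix.of fun i j : Fin a =>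
          TL (1 - (i : ℤ) + (j : ℤ)) (lam * s ^ ((i : ℤ) + (j : ℤ) + 1 - (a : ℤ)))) := by
  intro a ha _hb lam
  set lam0 : ℂ := lam * s ^ (-(a:ℤ)) with hlam0
  set C : Matrix (Fin (a+1)) (Fin (a+1)) ℂ :=
    Matrix.of (fun m k : Fin (a+1) => TL ((m:ℤ) - (k:ℤ)) (lam0 * s ^ ((k:ℤ) + (m:ℤ)))) with hC
  set y : Fin (a+1) → ℂ := fun k => (-1:ℂ)^(k:ℕ) * T1 ((k:ℕ):ℤ) (lam0 * s ^ ((k:ℕ):ℤ)) with hy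
  have hCy : C *ᵥ y = Pi.single 0 1 := by
    funext m
    rcases Fin.eq_zero_or_eq_succ m with rfl | ⟨j, rfl⟩
    · rw [show (C *ᵥ y) 0 = ∑ k : Fin (a+1), C 0 k * y k from rfl]
      rw [Finset.sum_eq_single 0]
      · simp [hC, hy, hTL0, hT10]
      · intro b _ hb
        have hb' : 0 < (b:ℕ) := Fin.pos_iff_ne_zero.mpr hb
        have : C 0 b = 0 := by
          rw [hC]
          apply hTLneg
          simp
          have h0 : ((0 : Fin (a+1)) : ℕ) = 0 := rfl
          omega
        rw [this, zero_mul]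
      · simp
    · rw [show (C *ᵥ y) j.succ = ∑ k : Fin (a+1), C j.succ k * y k from rfl]
      have hterm : ∀ k : Fin (a+1), C j.succ k * y k
          = (fun k : ℕ => (-1:ℂ)^k * T1 (k:ℤ) (lam0 * s ^ (k:ℤ))
              * TL ((((j:ℕ)+1 : ℕ):ℤ) - (k:ℤ)) (lam0 * s ^ ((k:ℤ) + (((j:ℕ)+1 : ℕ):ℤ)))) (k:ℕ) := by
        intro k
        rw [hC, hy]
        simp only [Matrix.of_apply, Fin.val_succ]
        push_cast
        ring
      rw [Finset.sum_congr rfl (fun k _ => hterm k),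
        Fin.sum_univ_eq_sum_range (fun k : ℕ => (-1:ℂ)^k * T1 (k:ℤ) (lam0 * s ^ (k:ℤ))
          * TL ((((j:ℕ)+1 : ℕ):ℤ) - (k:ℤ)) (lam0 * s ^ ((k:ℤ) + (((j:ℕ)+1 : ℕ):ℤ)))) (a+1)]
      rw [← Finset.sum_subset (Finset.range_subset_range.mpr (show (j:ℕ)+1+1 ≤ a+1 by have := j.isLt; omega))]
      · rw [relkey s hs T1 TL hT10 hT1neg hTL0 hTLdet ((j:ℕ)+1) (by omega) lam0]
        simp [Pi.single_eq_of_ne (Fin.succ_ne_zero j)]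
      · intro x _ hx
        have hx' : (j:ℕ)+1+1 ≤ x := by simp at hx; omega
        have : TL ((((j:ℕ)+1 : ℕ):ℤ) - (x:ℤ)) (lam0 * s ^ ((x:ℤ) + (((j:ℕ)+1 : ℕ):ℤ))) = 0 := by
          apply hTLneg
          push_cast
          omega
        rw [this, mul_zero]
  have hdet : C.det = 1 := by
    rw [Matrix.det_of_lowerTriangular C ?_]
    · apply Finset.prod_eq_one
      intro x _
      rw [hC]
      simp [hTL0]
    · intro i j hij
      have hij' : (i:ℕ) < (j:ℕ) := hij
      rw [hC]
      apply hTLneg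
      simp
      omega
  have hyc : y = C.adjugate *ᵥ Pi.single 0 1 := by
    rw [← hCy, Matrix.mulVec_mulVec, Matrix.adjugate_mul, hdet, one_smul, Matrix.one_mulVec]
  have hlast : y (Fin.last a) = C.adjugate (Fin.last a) 0 * 1 := by
    rw [hyc, Matrix.mulVec_single]
    rfl
  rw [Matrix.adjugate_apply] at hlast
  have hdet2 : (C.updateRow 0 (Pi.single (Fin.last a) 1)).det
      = (-1:ℂ)^a * Matrix.det (Matrix.of fun i j : Fin a =>
          TL (1 - (i : ℤ) + (j : ℤ)) (lam * s ^ ((i : ℤ) + (j : ℤ) + 1 - (a : ℤ)))) := by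
    rw [Matrix.det_succ_row_zero, Finset.sum_eq_single (Fin.last a)]
    · have hsub : ((C.updateRow 0 (Pi.single (Fin.last a) 1)).submatrix Fin.succ (Fin.last a).succAbove)
          = (Matrix.of fun i j : Fin a =>
              TL (1 - (i : ℤ) + (j : ℤ)) (lam * s ^ ((i : ℤ) + (j : ℤ) + 1 - (a : ℤ))))ᵀ := by
        rw [Fin.succAbove_last]
        ext r c
        rw [Matrix.submatrix_apply, Matrix.updateRow_ne (Fin.succ_ne_zero r), hC]
        simp only [Matrix.of_apply, Matrix.transpose_apply, Fin.val_succ, Fin.coe_castSucc]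
        rw [show (((r:ℕ)+1 : ℕ):ℤ) - (c:ℤ) = 1 - (c:ℤ) + (r:ℕ) from by push_cast; ring]
        rw [hlam0, mul_assoc, ← zpow_add₀ hs,
          show (-(a:ℤ) + ((c:ℤ) + ((r:ℕ)+1 : ℕ))) = (c:ℤ) + (r:ℤ) + 1 - a from by push_cast; ring]
      rw [hsub, Matrix.det_transpose, Matrix.updateRow_self, Pi.single_eq_same, Fin.val_last]
      ring
    · intro b _ hb
      rw [Matrix.updateRow_self, Pi.single_eq_of_ne hb, mul_zero, zero_mul]
    · simp
  rw [hdet2] at hlast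
  have hylast : y (Fin.last a) = (-1:ℂ)^a * T1 (a:ℤ) lam := by
    rw [hy]
    simp only [Fin.val_last]
    rw [hlam0, mul_assoc, ← zpow_add₀ hs, neg_add_cancel, zpow_zero, mul_one]
  rw [hylast, mul_one] at hlast
  exact mul_left_cancel₀ (pow_ne_zero _ (by norm_num : (-1:ℂ) ≠ 0)) hlast
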